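/- With M = K + (K_G Z_N) H_N (K_G Z_N)^T + Z_C H_C Z_C^T as above and C = (K - σK_G)† K, the matrix M C is symmetric; equivalently, C is self-adjoint with respect to the inner product ⟨x, y⟩_M = x^T M y. -/

import Mathlib

open Matrix

lemma aux_mul_eq_zero {m k : Type*} [Fintype m] [Fintype k] [DecidableEq k]
    (B : Matrix m m ℝ) (Z : Matrix m k ℝ)
    (h : ∀ v : k → ℝ, B *ᵥ (Z *ᵥ v) = 0) : B * Z = 0 := by
  ext i j
  have h1 := congrFun (h (Pi.single j 1)) i
  rw [Matrix.mulVec_mulVec] at h1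
  simpa [Matrix.mulVec_single] using h1

lemma aux_fromBlocks_sub {n m o p : Type*} (A B C D A' B' C' D' : Matrix _ _ ℝ) :
    (Matrix.fromBlocks A B C D : Matrix (n ⊕ o) (m ⊕ p) ℝ) - Matrix.fromBlocks A' B' C' D'
      = Matrix.fromBlocks (A - A') (B - B') (C - C') (D - D') := by
  ext (i|i) (j|j) <;> simp

/-- The four Moore–Penrose conditions characterizing the pseudo-inverse `P` of `A`. -/
def IsMoorePenrose {m : Type*} [Fintype m] (A P : Matrix m m ℝ) : Prop :=
  A * P * A = A ∧ P * A * P = P ∧ (A * P)ᵀ = A * P ∧ (P * A)ᵀ = P * A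

theorem stmt16 {n1 n2 n3 : ℕ}
    (K KG : Matrix (Fin n1 ⊕ (Fin n2 ⊕ Fin n3)) (Fin n1 ⊕ (Fin n2 ⊕ Fin n3)) ℝ)
    (hKpsd : K.PosSemidef) (hKG : KGᵀ = KG)
    (W : Matrix (Fin n1 ⊕ (Fin n2 ⊕ Fin n3)) (Fin n1 ⊕ (Fin n2 ⊕ Fin n3)) ℝ)
    (hW : IsUnit W)
    (Λ1 : Fin n1 → ℝ) (Λ2 : Fin n2 → ℝ) (hΛ2 : ∀ i, Λ2 i ≠ 0)
    (hcanKG : Wᵀ * KG * W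
      = Matrix.fromBlocks (Matrix.diagonal Λ1) 0 0
          (Matrix.fromBlocks (Matrix.diagonal Λ2) 0 0 0))
    (hcanK : Wᵀ * K * W
      = Matrix.fromBlocks (1 : Matrix (Fin n1) (Fin n1) ℝ) 0 0 0)
    (hW31 : (W.submatrix id (Sum.inr ∘ Sum.inr : Fin n3 → _))ᵀ
      * W.submatrix id (Sum.inl : Fin n1 → _) = 0)
    (hW32 : (W.submatrix id (Sum.inr ∘ Sum.inr : Fin n3 → _))ᵀ
      * W.submatrix id (Sum.inr ∘ Sum.inl : Fin n2 → _) = 0)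
    (ZN : Matrix (Fin n1 ⊕ (Fin n2 ⊕ Fin n3)) (Fin n2) ℝ)
    (ZC : Matrix (Fin n1 ⊕ (Fin n2 ⊕ Fin n3)) (Fin n3) ℝ)
    (hZind : LinearIndependent ℝ (Matrix.fromCols ZN ZC)ᵀ)
    (hZspan : LinearMap.range (Matrix.fromCols ZN ZC).mulVecLin
      = LinearMap.ker K.mulVecLin)
    (hZCind : LinearIndependent ℝ ZCᵀ)
    (hZCspan : LinearMap.range ZC.mulVecLin
      = LinearMap.ker K.mulVecLin ⊓ LinearMap.ker KG.mulVecLin)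
    (HN : Matrix (Fin n2) (Fin n2) ℝ) (HC : Matrix (Fin n3) (Fin n3) ℝ)
    (hHN : HN.PosDef) (hHC : HC.PosDef)
    (σ : ℝ) (hσ : σ ≠ 0) (hσΛ1 : ∀ i, 1 - σ * Λ1 i ≠ 0)
    (P : Matrix (Fin n1 ⊕ (Fin n2 ⊕ Fin n3)) (Fin n1 ⊕ (Fin n2 ⊕ Fin n3)) ℝ)
    (hP : IsMoorePenrose (K - σ • KG) P) :
    ((K + (KG * ZN) * HN * (KG * ZN)ᵀ + ZC * HC * ZCᵀ) * (P * K))ᵀ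
      = (K + (KG * ZN) * HN * (KG * ZN)ᵀ + ZC * HC * ZCᵀ) * (P * K) := by
  obtain ⟨hP1, hP2, hP3, hP4⟩ := hP
  set A : Matrix (Fin n1 ⊕ (Fin n2 ⊕ Fin n3)) (Fin n1 ⊕ (Fin n2 ⊕ Fin n3)) ℝ
    := K - σ • KG with hA
  have hK : Kᵀ = K := by
    rw [← Matrix.conjTranspose_eq_transpose_of_trivial]
    exact hKpsd.isHermitian
  -- kernels
  have hKZN : K * ZN = 0 := by
    apply aux_mul_eq_zero
    intro v
    have hmem : ZN *ᵥ v ∈ LinearMap.range (Matrix.fromCols ZN ZC).mulVecLin :=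
      ⟨Sum.elim v 0, by simp [Matrix.mulVecLin_apply]⟩
    rw [hZspan, LinearMap.mem_ker, Matrix.mulVecLin_apply] at hmem
    exact hmem
  have hZCmem : ∀ v : Fin n3 → ℝ, K *ᵥ (ZC *ᵥ v) = 0 ∧ KG *ᵥ (ZC *ᵥ v) = 0 := by
    intro v
    have hmem : ZC *ᵥ v ∈ LinearMap.range ZC.mulVecLin := ⟨v, rfl⟩
    rw [hZCspan, Submodule.mem_inf, LinearMap.mem_ker, LinearMap.mem_ker] at hmem
    exact hmem
  have hKZC : K * ZC = 0 := aux_mul_eq_zero _ _ fun v => (hZCmem v).1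
  have hKGZC : KG * ZC = 0 := aux_mul_eq_zero _ _ fun v => (hZCmem v).2
  -- invertibility
  have : Invertible W := hW.nonempty_invertible.some
  have : Invertible Wᵀ := Matrix.invertibleTranspose W
  -- the matrix Q with A * Q = K
  set G : Matrix (Fin n1 ⊕ (Fin n2 ⊕ Fin n3)) (Fin n1 ⊕ (Fin n2 ⊕ Fin n3)) ℝ
    := Matrix.fromBlocks (Matrix.diagonal fun i => (1 - σ * Λ1 i)⁻¹) 0 0 0 with hG
  set Q : Matrix (Fin n1 ⊕ (Fin n2 ⊕ Fin n3)) (Fin n1 ⊕ (Fin n2 ⊕ Fin n3)) ℝ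
    := W * G * ⅟W with hQdef
  have key : (Wᵀ * K * W - σ • (Wᵀ * KG * W)) * G = Wᵀ * K * W := by
    rw [hcanK, hcanKG, hG, sub_mul, smul_mul_assoc, Matrix.fromBlocks_multiply,
      Matrix.fromBlocks_multiply, Matrix.fromBlocks_smul, aux_fromBlocks_sub]
    simp only [Matrix.mul_zero, Matrix.zero_mul, add_zero, zero_add, Matrix.one_mul,
      smul_zero, sub_zero, Matrix.diagonal_mul_diagonal]
    have hTL : (Matrix.diagonal fun i => (1 - σ * Λ1 i)⁻¹)
        - σ • Matrix.diagonal (fun i => Λ1 i * (1 - σ * Λ1 i)⁻¹)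
        = (1 : Matrix (Fin n1) (Fin n1) ℝ) := by
      have hf : (fun i => (1 - σ * Λ1 i)⁻¹ - (σ • fun i => Λ1 i * (1 - σ * Λ1 i)⁻¹) i)
          = fun _ : Fin n1 => (1 : ℝ) := by
        funext i
        have h := hσΛ1 i
        simp only [Pi.smul_apply, smul_eq_mul]
        field_simp
      rw [← Matrix.diagonal_smul, Matrix.diagonal_sub, hf, Matrix.diagonal_one]
    rw [hTL]
  have hQ : A * Q = K := by
    have hAW : Wᵀ * A * W = Wᵀ * K * W - σ • (Wᵀ * KG * W) := by
      rw [hA, Matrix.mul_sub, Matrix.sub_mul, Matrix.mul_smul, Matrix.smul_mul]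
    have e : A = ⅟Wᵀ * (Wᵀ * A * W) * ⅟W := by
      simp only [mul_assoc, mul_invOf_self, mul_one, invOf_mul_cancel_left]
    calc A * Q = (⅟Wᵀ * (Wᵀ * A * W) * ⅟W) * (W * G * ⅟W) := by rw [← e]
      _ = ⅟Wᵀ * ((Wᵀ * A * W) * G) * ⅟W := by
          simp only [mul_assoc, invOf_mul_cancel_left]
      _ = ⅟Wᵀ * (Wᵀ * K * W) * ⅟W := by rw [hAW, key]
      _ = K := by simp only [mul_assoc, mul_invOf_self, mul_one, invOf_mul_cancel_left]
  -- core identities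
  have hAPK : A * (P * K) = K := by
    calc A * (P * K) = A * (P * (A * Q)) := by rw [hQ]
      _ = (A * P * A) * Q := by simp only [Matrix.mul_assoc]
      _ = K := by rw [hP1, hQ]
  have hAsym : Aᵀ = A := by
    rw [hA, Matrix.transpose_sub, Matrix.transpose_smul, hK, hKG]
  have hK' : K = Qᵀ * A := by
    conv_lhs => rw [← hK, ← hQ]
    rw [Matrix.transpose_mul, hAsym]
  -- ZCᵀ * (P * K) = 0
  have hAZC : A * ZC = 0 := by
    rw [hA, Matrix.sub_mul, hKZC, Matrix.smul_mul, hKGZC, smul_zero, sub_zero]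
  have hZCPA : ZCᵀ * (P * A) = 0 := by
    calc ZCᵀ * (P * A) = ZCᵀ * (P * A)ᵀ := by rw [hP4]
      _ = ((P * A) * ZC)ᵀ := by rw [Matrix.transpose_mul (P * A) ZC]
      _ = (P * (A * ZC))ᵀ := by rw [Matrix.mul_assoc]
      _ = 0 := by rw [hAZC, Matrix.mul_zero, Matrix.transpose_zero]
  have hZCPK : ZCᵀ * (P * K) = 0 := by
    calc ZCᵀ * (P * K) = ZCᵀ * ((P * A * P) * K) := by rw [hP2]
      _ = (ZCᵀ * (P * A)) * (P * K) := by simp only [Matrix.mul_assoc]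
      _ = 0 := by rw [hZCPA, Matrix.zero_mul]
  -- ZNᵀ * (KG * (P * K)) = 0
  have hZNK : ZNᵀ * K = 0 := by
    calc ZNᵀ * K = (Kᵀ * ZN)ᵀ := by rw [Matrix.transpose_mul Kᵀ ZN, Matrix.transpose_transpose]
      _ = 0 := by rw [hK, hKZN, Matrix.transpose_zero]
  have hZNA : ZNᵀ * A = (-σ) • (ZNᵀ * KG) := by
    rw [hA, Matrix.mul_sub, hZNK, Matrix.mul_smul, zero_sub, neg_smul]
  have hZNKGPK : ZNᵀ * (KG * (P * K)) = 0 := by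
    have h1 : ZNᵀ * (A * (P * K)) = 0 := by rw [hAPK, hZNK]
    have h2 : (ZNᵀ * A) * (P * K) = 0 := by rw [Matrix.mul_assoc]; exact h1
    rw [hZNA, Matrix.smul_mul] at h2
    have h3 : (ZNᵀ * KG) * (P * K) = 0 := by
      rcases smul_eq_zero.mp h2 with h | h
      · exact absurd h (by simpa using hσ)
      · exact h
    rw [← Matrix.mul_assoc]; exact h3
  -- K * (P * K) symmetric
  have e1 : K * (P * K) = Qᵀ * K := by
    calc K * (P * K) = (Qᵀ * A) * (P * K) := by rw [← hK']
      _ = Qᵀ * (A * (P * K)) := by rw [Matrix.mul_assoc]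
      _ = Qᵀ * K := by rw [hAPK]
  have hKQ : K * Q = Qᵀ * K := by
    calc K * Q = (Qᵀ * A) * Q := by rw [← hK']
      _ = Qᵀ * (A * Q) := by rw [Matrix.mul_assoc]
      _ = Qᵀ * K := by rw [hQ]
  have hsym : (K * (P * K))ᵀ = K * (P * K) := by
    rw [e1, Matrix.transpose_mul, Matrix.transpose_transpose, hK, hKQ]
  -- assemble
  have hT2 : ((KG * ZN) * HN * (KG * ZN)ᵀ) * (P * K) = 0 := by
    rw [Matrix.transpose_mul, hKG]
    calc (KG * ZN * HN * (ZNᵀ * KG)) * (P * K)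
        = (KG * ZN * HN) * (ZNᵀ * (KG * (P * K))) := by simp only [Matrix.mul_assoc]
      _ = 0 := by rw [hZNKGPK, Matrix.mul_zero]
  have hT3 : (ZC * HC * ZCᵀ) * (P * K) = 0 := by
    calc (ZC * HC * ZCᵀ) * (P * K) = (ZC * HC) * (ZCᵀ * (P * K)) := by
          simp only [Matrix.mul_assoc]
      _ = 0 := by rw [hZCPK, Matrix.mul_zero]
  have hM : (K + (KG * ZN) * HN * (KG * ZN)ᵀ + ZC * HC * ZCᵀ) * (P * K) = K * (P * K) := by
    rw [Matrix.add_mul, Matrix.add_mul, hT2, hT3, add_zero, add_zero]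
  rw [hM, hsym]
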